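/- Let n≥2, t>0, x<y, and a_0,…,a_{n−1}∈ℝ with a_i≤y for all 0≤i≤n−1. Then, writing 𝐚=(a_0,…,a_{n−1}), I_n(t;𝐚,x) ≤ (n/((y−x)t))·I_n(t;𝐚,y). -/

import Mathlib

open MeasureTheory Filter

/-- The function `I_n(t; a_0,…,a_n)` of the paper:
`I_n(t;a) = e^{t a_n} ∫_{ℝ₊^n} exp{Σ_{i<n} x_i(a_i−a_n)} 1{Σ_{i<n} x_i < t} dx`. -/
noncomputable def Ifun (n : ℕ) (t : ℝ) (a : Fin (n+1) → ℝ) : ℝ :=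
  Real.exp (t * a (Fin.last n)) *
    ∫ x : Fin n → ℝ,
      Set.indicator {y : Fin n → ℝ | (∀ i, 0 ≤ y i) ∧ (∑ i, y i) < t}
        (fun y => Real.exp (∑ i, y i * (a i.castSucc - a (Fin.last n)))) x


namespace S12
open Real Set ENNReal

lemma meas_sum (κ : ℕ) : Measurable (fun z : Fin κ → ℝ => ∑ i, z i) :=
  Finset.measurable_sum _ (fun i _ => measurable_pi_apply i)

lemma meas_nonnegset (κ : ℕ) : MeasurableSet {z : Fin κ → ℝ | ∀ i : Fin κ, 0 ≤ z i} := by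
  have h : {z : Fin κ → ℝ | ∀ i : Fin κ, 0 ≤ z i} = ⋂ i, {z : Fin κ → ℝ | 0 ≤ z i} := by
    ext z; simp
  rw [h]
  exact MeasurableSet.iInter fun i => measurableSet_le measurable_const (measurable_pi_apply i)

noncomputable def gl (m : ℕ) (a : Fin (m+1) → ℝ) (s : ℝ) : ℝ≥0∞ :=
  ∫⁻ w : Fin m → ℝ,
    Set.indicator {w : Fin m → ℝ | (∀ j, 0 ≤ w j) ∧ (∑ j, w j) ≤ s}
      (fun w => ENNReal.ofReal (Real.exp ((s - ∑ j, w j) * a 0 + ∑ j, w j * a j.succ))) w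

lemma gl_measurable (m : ℕ) (a : Fin (m+1) → ℝ) : Measurable (gl m a) := by
  have h1 : MeasurableSet {p : ℝ × (Fin m → ℝ) | ∀ j, 0 ≤ p.2 j} := by
    have h : {p : ℝ × (Fin m → ℝ) | ∀ j, 0 ≤ p.2 j}
        = ⋂ j, {p : ℝ × (Fin m → ℝ) | 0 ≤ p.2 j} := by ext p; simp
    rw [h]
    exact MeasurableSet.iInter fun j =>
      measurableSet_le measurable_const (measurable_snd.eval)
  have h2 : MeasurableSet {p : ℝ × (Fin m → ℝ) | (∑ j, p.2 j) ≤ p.1} :=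
    measurableSet_le ((meas_sum m).comp measurable_snd) measurable_fst
  have hset : MeasurableSet {p : ℝ × (Fin m → ℝ) | (∀ j, 0 ≤ p.2 j) ∧ (∑ j, p.2 j) ≤ p.1} :=
    h1.inter h2
  have hfun : Measurable (fun p : ℝ × (Fin m → ℝ) =>
      ENNReal.ofReal (Real.exp ((p.1 - ∑ j, p.2 j) * a 0 + ∑ j, p.2 j * a j.succ))) := by
    apply ENNReal.measurable_ofReal.comp
    apply Real.measurable_exp.comp
    apply Measurable.add
    · exact (measurable_fst.sub ((meas_sum m).comp measurable_snd)).mul_const _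
    · exact Finset.measurable_sum _ fun j _ =>
        (measurable_snd.eval).mul_const _
  have key : Measurable (fun p : ℝ × (Fin m → ℝ) =>
      Set.indicator {w : Fin m → ℝ | (∀ j, 0 ≤ w j) ∧ (∑ j, w j) ≤ p.1}
        (fun w => ENNReal.ofReal (Real.exp ((p.1 - ∑ j, w j) * a 0 + ∑ j, w j * a j.succ))) p.2) := by
    have he : (fun p : ℝ × (Fin m → ℝ) =>
        Set.indicator {w : Fin m → ℝ | (∀ j, 0 ≤ w j) ∧ (∑ j, w j) ≤ p.1}
          (fun w => ENNReal.ofReal (Real.exp ((p.1 - ∑ j, w j) * a 0 + ∑ j, w j * a j.succ))) p.2)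
        = Set.indicator {p : ℝ × (Fin m → ℝ) | (∀ j, 0 ≤ p.2 j) ∧ (∑ j, p.2 j) ≤ p.1}
          (fun p => ENNReal.ofReal (Real.exp ((p.1 - ∑ j, p.2 j) * a 0 + ∑ j, p.2 j * a j.succ))) := by
      funext p
      by_cases h : (∀ j, 0 ≤ p.2 j) ∧ (∑ j, p.2 j) ≤ p.1 <;>
        simp [Set.indicator_apply, h]
    rw [he]
    exact hfun.indicator hset
  exact Measurable.lintegral_prod_right' key

lemma meas_simplex (m : ℕ) (s : ℝ) :
    MeasurableSet {w : Fin m → ℝ | (∀ j, 0 ≤ w j) ∧ (∑ j, w j) ≤ s} :=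
  (meas_nonnegset m).inter (measurableSet_le (meas_sum m) measurable_const)

lemma meas_integrand (m : ℕ) (a : Fin (m+1) → ℝ) (s : ℝ) :
    Measurable (fun w : Fin m → ℝ =>
      Set.indicator {w : Fin m → ℝ | (∀ j, 0 ≤ w j) ∧ (∑ j, w j) ≤ s}
        (fun w => ENNReal.ofReal (Real.exp ((s - ∑ j, w j) * a 0 + ∑ j, w j * a j.succ))) w) := by
  apply Measurable.indicator _ (meas_simplex m s)
  apply ENNReal.measurable_ofReal.comp
  apply Real.measurable_exp.comp
  exact ((measurable_const.sub (meas_sum m)).mul_const _).add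
    (Finset.measurable_sum _ fun j _ => (measurable_pi_apply j).mul_const _)

lemma exp_bound (m : ℕ) (a : Fin (m+1) → ℝ) (y : ℝ) (hy : ∀ i, a i ≤ y) {s : ℝ}
    {w : Fin m → ℝ} (hw : w ∈ {w : Fin m → ℝ | (∀ j, 0 ≤ w j) ∧ (∑ j, w j) ≤ s}) :
    (s - ∑ j, w j) * a 0 + ∑ j, w j * a j.succ ≤ s * y := by
  obtain ⟨hw0, hws⟩ := hw
  have h1 : (s - ∑ j, w j) * a 0 ≤ (s - ∑ j, w j) * y :=
    mul_le_mul_of_nonneg_left (hy 0) (by linarith)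
  have h2 : ∑ j, w j * a j.succ ≤ ∑ j, w j * y :=
    Finset.sum_le_sum fun j _ => mul_le_mul_of_nonneg_left (hy j.succ) (hw0 j)
  have h3 : ∑ j, w j * y = (∑ j, w j) * y := by rw [Finset.sum_mul]
  nlinarith [h1, h2]

lemma gl_zero (m : ℕ) (a : Fin (m+1) → ℝ) {s : ℝ} (hs : s < 0) : gl m a s = 0 := by
  unfold gl
  have : ∀ w : Fin m → ℝ, w ∉ {w : Fin m → ℝ | (∀ j, 0 ≤ w j) ∧ (∑ j, w j) ≤ s} := by
    intro w hw
    obtain ⟨hw0, hws⟩ := hw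
    have : (0:ℝ) ≤ ∑ j, w j := Finset.sum_nonneg fun j _ => hw0 j
    linarith
  simp only [Set.indicator_of_notMem (this _)]
  simp

lemma gl_le (m : ℕ) (a : Fin (m+1) → ℝ) (y : ℝ) (hy : ∀ i, a i ≤ y) {s : ℝ} (hs : 0 ≤ s) :
    gl m a s ≤ ENNReal.ofReal (Real.exp (s * y)) * ENNReal.ofReal s ^ m := by
  have hsub : {w : Fin m → ℝ | (∀ j, 0 ≤ w j) ∧ (∑ j, w j) ≤ s}
      ⊆ Set.pi Set.univ (fun _ : Fin m => Set.Icc (0:ℝ) s) := by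
    intro w hw
    intro j _
    refine ⟨hw.1 j, ?_⟩
    calc w j ≤ ∑ i, w i := Finset.single_le_sum (fun i _ => hw.1 i) (Finset.mem_univ j)
    _ ≤ s := hw.2
  calc gl m a s ≤ ∫⁻ w : Fin m → ℝ,
      Set.indicator {w : Fin m → ℝ | (∀ j, 0 ≤ w j) ∧ (∑ j, w j) ≤ s}
        (fun _ => ENNReal.ofReal (Real.exp (s * y))) w := by
        apply lintegral_mono
        intro w
        by_cases hw : w ∈ {w : Fin m → ℝ | (∀ j, 0 ≤ w j) ∧ (∑ j, w j) ≤ s}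
        · simp only [Set.indicator_of_mem hw]
          exact ENNReal.ofReal_le_ofReal (Real.exp_le_exp.2 (exp_bound m a y hy hw))
        · simp [Set.indicator_of_notMem hw]
    _ = ENNReal.ofReal (Real.exp (s * y))
        * volume {w : Fin m → ℝ | (∀ j, 0 ≤ w j) ∧ (∑ j, w j) ≤ s} :=
      lintegral_indicator_const (meas_simplex m s) _
    _ ≤ ENNReal.ofReal (Real.exp (s * y)) * ENNReal.ofReal s ^ m := by
      apply mul_le_mul_right
      calc volume {w : Fin m → ℝ | (∀ j, 0 ≤ w j) ∧ (∑ j, w j) ≤ s}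
          ≤ volume (Set.pi Set.univ (fun _ : Fin m => Set.Icc (0:ℝ) s)) :=
            measure_mono hsub
        _ = ENNReal.ofReal s ^ m := by
            rw [volume_pi_pi]
            simp [Real.volume_Icc]

lemma gl_lt_top (m : ℕ) (a : Fin (m+1) → ℝ) (y : ℝ) (hy : ∀ i, a i ≤ y) (s : ℝ) :
    gl m a s < ⊤ := by
  rcases lt_or_ge s 0 with h | h
  · simp [gl_zero m a h]
  · exact lt_of_le_of_lt (gl_le m a y hy h)
      (ENNReal.mul_lt_top ENNReal.ofReal_lt_top (pow_lt_top ENNReal.ofReal_lt_top))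

lemma gl_scale (m : ℕ) (a : Fin (m+1) → ℝ) (y : ℝ) (hy : ∀ i, a i ≤ y)
    {σ s : ℝ} (hσ : 0 < σ) (hσs : σ ≤ s) :
    ENNReal.ofReal σ ^ m * gl m a s
      ≤ ENNReal.ofReal s ^ m * (ENNReal.ofReal (Real.exp ((s - σ) * y)) * gl m a σ) := by
  have hs0 : 0 < s := lt_of_lt_of_le hσ hσs
  set lam : ℝ := s / σ with hlam
  have hlam0 : 0 < lam := div_pos hs0 hσ
  have hlam1 : 1 ≤ lam := (one_le_div hσ).2 hσs
  have hlamσ : lam * σ = s := div_mul_cancel₀ s hσ.ne'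
  set f : (Fin m → ℝ) → ℝ≥0∞ := fun w =>
    Set.indicator {w : Fin m → ℝ | (∀ j, 0 ≤ w j) ∧ (∑ j, w j) ≤ s}
      (fun w => ENNReal.ofReal (Real.exp ((s - ∑ j, w j) * a 0 + ∑ j, w j * a j.succ))) w
    with hf
  have hfm : Measurable f := meas_integrand m a s
  -- change of variables
  have hmap : Measure.map (fun v : Fin m → ℝ => lam • v) volume
      = ENNReal.ofReal |(lam ^ m)⁻¹| • volume := by
    have := Measure.map_addHaar_smul (volume : Measure (Fin m → ℝ)) hlam0.ne'
    rwa [Module.finrank_fin_fun] at this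
  have h1 : ∫⁻ v, f (lam • v) = ENNReal.ofReal ((lam ^ m)⁻¹) * gl m a s := by
    have := lintegral_map hfm (measurable_const_smul lam)
      (μ := (volume : Measure (Fin m → ℝ)))
    rw [hmap] at this
    rw [← this, lintegral_smul_measure]
    congr 1
    · rw [abs_of_nonneg (by positivity)]
  -- pointwise bound
  have h2 : ∀ v : Fin m → ℝ, f (lam • v)
      ≤ ENNReal.ofReal (Real.exp ((s - σ) * y)) *
        Set.indicator {w : Fin m → ℝ | (∀ j, 0 ≤ w j) ∧ (∑ j, w j) ≤ σ}
          (fun w => ENNReal.ofReal (Real.exp ((σ - ∑ j, w j) * a 0 + ∑ j, w j * a j.succ))) v := by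
    intro v
    by_cases hv : v ∈ {w : Fin m → ℝ | (∀ j, 0 ≤ w j) ∧ (∑ j, w j) ≤ σ}
    · have hsum : ∑ j, (lam • v) j = lam * ∑ j, v j := by
        simp [Finset.mul_sum]
      have hmem : lam • v ∈ {w : Fin m → ℝ | (∀ j, 0 ≤ w j) ∧ (∑ j, w j) ≤ s} := by
        constructor
        · intro j
          have := hv.1 j
          have : 0 ≤ lam * v j := mul_nonneg hlam0.le this
          simpa using this
        · rw [hsum]
          calc lam * ∑ j, v j ≤ lam * σ := by
                exact mul_le_mul_of_nonneg_left hv.2 hlam0.le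
            _ = s := hlamσ
      rw [hf]
      simp only [Set.indicator_of_mem hmem, Set.indicator_of_mem hv]
      rw [← ENNReal.ofReal_mul (Real.exp_nonneg _), ← Real.exp_add]
      apply ENNReal.ofReal_le_ofReal
      apply Real.exp_le_exp.2
      have hcs : (s - ∑ j, (lam • v) j) * a 0 + ∑ j, (lam • v) j * a j.succ
          = lam * ((σ - ∑ j, v j) * a 0 + ∑ j, v j * a j.succ) := by
        rw [hsum]
        have : ∑ j, (lam • v) j * a j.succ = lam * ∑ j, v j * a j.succ := by
          rw [Finset.mul_sum]
          apply Finset.sum_congr rfl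
          intro j _
          simp [mul_assoc]
        rw [this, ← hlamσ]
        ring
      rw [hcs]
      have hcσ : (σ - ∑ j, v j) * a 0 + ∑ j, v j * a j.succ ≤ σ * y :=
        exp_bound m a y hy hv
      have : lam * ((σ - ∑ j, v j) * a 0 + ∑ j, v j * a j.succ)
          = ((σ - ∑ j, v j) * a 0 + ∑ j, v j * a j.succ)
            + (lam - 1) * ((σ - ∑ j, v j) * a 0 + ∑ j, v j * a j.succ) := by ring
      rw [this]
      have h4 : (lam - 1) * ((σ - ∑ j, v j) * a 0 + ∑ j, v j * a j.succ)
          ≤ (lam - 1) * (σ * y) := mul_le_mul_of_nonneg_left hcσ (by linarith)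
      have h5 : (lam - 1) * (σ * y) = (s - σ) * y := by
        rw [← hlamσ]; ring
      linarith
    · have hnotmem : lam • v ∉ {w : Fin m → ℝ | (∀ j, 0 ≤ w j) ∧ (∑ j, w j) ≤ s} := by
        intro hmem
        apply hv
        constructor
        · intro j
          have := hmem.1 j
          simp only [Pi.smul_apply, smul_eq_mul] at this
          exact nonneg_of_mul_nonneg_right this hlam0
        · have hsum : ∑ j, (lam • v) j = lam * ∑ j, v j := by simp [Finset.mul_sum]
          have h6 := hmem.2
          rw [hsum] at h6
          have := (mul_le_mul_iff_right₀ hlam0).1 (by rw [hlamσ]; exact h6 : lam * ∑ j, v j ≤ lam * σ)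
          exact this
      rw [hf]
      simp [Set.indicator_of_notMem hnotmem]
  have key : ENNReal.ofReal ((lam ^ m)⁻¹) * gl m a s
      ≤ ENNReal.ofReal (Real.exp ((s - σ) * y)) * gl m a σ := by
    rw [← h1]
    calc ∫⁻ v, f (lam • v) ≤ ∫⁻ v, ENNReal.ofReal (Real.exp ((s - σ) * y)) *
        Set.indicator {w : Fin m → ℝ | (∀ j, 0 ≤ w j) ∧ (∑ j, w j) ≤ σ}
          (fun w => ENNReal.ofReal (Real.exp ((σ - ∑ j, w j) * a 0 + ∑ j, w j * a j.succ))) v :=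
        lintegral_mono h2
      _ = ENNReal.ofReal (Real.exp ((s - σ) * y)) * gl m a σ :=
        lintegral_const_mul _ (meas_integrand m a σ)
  have hσm : ENNReal.ofReal σ ^ m = ENNReal.ofReal s ^ m * ENNReal.ofReal ((lam ^ m)⁻¹) := by
    rw [← ENNReal.ofReal_pow hs0.le, ← ENNReal.ofReal_mul (by positivity),
      ← ENNReal.ofReal_pow hσ.le]
    congr 1
    rw [hlam]
    rw [div_pow]
    rw [inv_div]
    field_simp
  rw [hσm, mul_assoc]
  exact mul_le_mul_right key _

noncomputable def LJ (m : ℕ) (a : Fin (m+1) → ℝ) (b t : ℝ) : ℝ≥0∞ :=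
  ∫⁻ z : Fin (m+1) → ℝ,
    Set.indicator {z : Fin (m+1) → ℝ | (∀ i, 0 ≤ z i) ∧ (∑ i, z i) < t}
      (fun z => ENNReal.ofReal (Real.exp (∑ i, z i * (a i - b)))) z

/-- the product-space integrand -/
noncomputable def Gf (m : ℕ) (a : Fin (m+1) → ℝ) (b t : ℝ) : ℝ × (Fin m → ℝ) → ℝ≥0∞ :=
  fun p =>
    Set.indicator {p : ℝ × (Fin m → ℝ) |
        (0 ≤ p.1 ∧ ∀ j, 0 ≤ p.2 j) ∧ p.1 + ∑ j, p.2 j < t}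
      (fun p => ENNReal.ofReal
        (Real.exp (p.1 * (a 0 - b) + ∑ j, p.2 j * (a j.succ - b)))) p

/-- the sliced integrand, as a function on `(Fin m → ℝ) × ℝ` -/
noncomputable def Hf (m : ℕ) (a : Fin (m+1) → ℝ) (b t : ℝ) : (Fin m → ℝ) × ℝ → ℝ≥0∞ :=
  fun q =>
    Set.indicator {q : (Fin m → ℝ) × ℝ |
        (∀ j, 0 ≤ q.1 j) ∧ (∑ j, q.1 j) ≤ q.2 ∧ q.2 < t}
      (fun q => ENNReal.ofReal
        (Real.exp ((q.2 - ∑ j, q.1 j) * (a 0 - b) + ∑ j, q.1 j * (a j.succ - b)))) q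

lemma Gf_meas (m : ℕ) (a : Fin (m+1) → ℝ) (b t : ℝ) : Measurable (Gf m a b t) := by
  have h1 : MeasurableSet {p : ℝ × (Fin m → ℝ) | ∀ j, 0 ≤ p.2 j} :=
    measurable_snd (meas_nonnegset m)
  have h0 : MeasurableSet {p : ℝ × (Fin m → ℝ) | 0 ≤ p.1} :=
    measurableSet_le measurable_const measurable_fst
  have h2 : MeasurableSet {p : ℝ × (Fin m → ℝ) | p.1 + ∑ j, p.2 j < t} :=
    measurableSet_lt (measurable_fst.add ((meas_sum m).comp measurable_snd)) measurable_const
  have hfun : Measurable (fun p : ℝ × (Fin m → ℝ) =>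
      ENNReal.ofReal (Real.exp (p.1 * (a 0 - b) + ∑ j, p.2 j * (a j.succ - b)))) := by
    apply ENNReal.measurable_ofReal.comp
    apply Real.measurable_exp.comp
    exact (measurable_fst.mul_const _).add
      (Finset.measurable_sum _ fun j _ => (measurable_snd.eval).mul_const _)
  exact hfun.indicator ((h0.inter h1).inter h2)

lemma Hf_meas (m : ℕ) (a : Fin (m+1) → ℝ) (b t : ℝ) : Measurable (Hf m a b t) := by
  have h1 : MeasurableSet {q : (Fin m → ℝ) × ℝ | ∀ j, 0 ≤ q.1 j} :=
    measurable_fst (meas_nonnegset m)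
  have h2 : MeasurableSet {q : (Fin m → ℝ) × ℝ | (∑ j, q.1 j) ≤ q.2 ∧ q.2 < t} :=
    (measurableSet_le ((meas_sum m).comp measurable_fst) measurable_snd).inter
      (measurableSet_lt measurable_snd measurable_const)
  have hfun : Measurable (fun q : (Fin m → ℝ) × ℝ =>
      ENNReal.ofReal (Real.exp ((q.2 - ∑ j, q.1 j) * (a 0 - b) + ∑ j, q.1 j * (a j.succ - b)))) := by
    apply ENNReal.measurable_ofReal.comp
    apply Real.measurable_exp.comp
    exact ((measurable_snd.sub ((meas_sum m).comp measurable_fst)).mul_const _).add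
      (Finset.measurable_sum _ fun j _ => (measurable_fst.eval).mul_const _)
  exact hfun.indicator (h1.inter h2)

lemma slice (m : ℕ) (a : Fin (m+1) → ℝ) (b t : ℝ) :
    LJ m a b t = ∫⁻ s in Set.Iio t,
      ENNReal.ofReal (Real.exp (-(s * b))) * gl m a s := by
  classical
  -- step 1: split off coordinate 0
  have step1 : LJ m a b t = ∫⁻ p : ℝ × (Fin m → ℝ), Gf m a b t p := by
    have MP := (volume_preserving_piFinSuccAbove (fun _ : Fin (m+1) => ℝ) 0).symm
    rw [LJ, ← MP.lintegral_comp]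
    · apply lintegral_congr
      intro p
      have hsymm : (MeasurableEquiv.piFinSuccAbove (fun _ : Fin (m+1) => ℝ) 0).symm p
          = Fin.cons p.1 p.2 := by
        simp [MeasurableEquiv.piFinSuccAbove_symm_apply, Fin.insertNthEquiv,
          Fin.insertNth_zero]
      rw [hsymm]
      simp only [Gf]
      have hcond : ((∀ i, 0 ≤ (Fin.cons p.1 p.2 : Fin (m+1) → ℝ) i) ∧ (∑ i, (Fin.cons p.1 p.2 : Fin (m+1) → ℝ) i) < t)
          ↔ ((0 ≤ p.1 ∧ ∀ j, 0 ≤ p.2 j) ∧ p.1 + ∑ j, p.2 j < t) := by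
        rw [Fin.forall_fin_succ, Fin.sum_univ_succ]
        simp
      have hval : (∑ i, (Fin.cons p.1 p.2 : Fin (m+1) → ℝ) i * (a i - b))
          = p.1 * (a 0 - b) + ∑ j, p.2 j * (a j.succ - b) := by
        rw [Fin.sum_univ_succ]
        simp
      simp only [Set.indicator_apply, Set.mem_setOf_eq, hval]
      rw [if_congr hcond rfl rfl]
    · apply (Measurable.indicator _ _)
      · apply ENNReal.measurable_ofReal.comp
        apply Real.measurable_exp.comp
        exact Finset.measurable_sum _ fun i _ => (measurable_pi_apply i).mul_const _
      · exact (meas_nonnegset (m+1)).inter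
          (measurableSet_lt (meas_sum (m+1)) measurable_const)
  -- step 2: Tonelli and translation
  have step2 : (∫⁻ p : ℝ × (Fin m → ℝ), Gf m a b t p)
      = ∫⁻ w : Fin m → ℝ, ∫⁻ s : ℝ, Hf m a b t (w, s) := by
    rw [Measure.volume_eq_prod, lintegral_prod_symm' _ (Gf_meas m a b t)]
    apply lintegral_congr
    intro w
    have htrans : ∀ z₀ : ℝ, Gf m a b t (z₀, w) = Hf m a b t (w, z₀ + ∑ j, w j) := by
      intro z₀
      simp only [Gf, Hf]
      have hcond : ((0 ≤ z₀ ∧ ∀ j, 0 ≤ w j) ∧ z₀ + ∑ j, w j < t)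
          ↔ ((∀ j, 0 ≤ w j) ∧ (∑ j, w j) ≤ z₀ + ∑ j, w j ∧ z₀ + ∑ j, w j < t) := by
        constructor
        · rintro ⟨⟨h1, h2⟩, h3⟩
          exact ⟨h2, by linarith, h3⟩
        · rintro ⟨h1, h2, h3⟩
          exact ⟨⟨by linarith, h1⟩, h3⟩
      simp only [Set.indicator_apply, Set.mem_setOf_eq, add_sub_cancel_right]
      rw [if_congr hcond rfl rfl]
    calc (∫⁻ z₀ : ℝ, Gf m a b t (z₀, w))
        = ∫⁻ z₀ : ℝ, Hf m a b t (w, z₀ + ∑ j, w j) := by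
          apply lintegral_congr; exact htrans
      _ = ∫⁻ s : ℝ, Hf m a b t (w, s) := by
          exact (measurePreserving_add_right volume (∑ j, w j)).lintegral_comp
            ((Hf_meas m a b t).comp measurable_prodMk_left)
  -- step 3: swap
  have step3 : (∫⁻ w : Fin m → ℝ, ∫⁻ s : ℝ, Hf m a b t (w, s))
      = ∫⁻ s : ℝ, ∫⁻ w : Fin m → ℝ, Hf m a b t (w, s) :=
    lintegral_lintegral_swap (Hf_meas m a b t).aemeasurable
  -- step 4: inner integral
  have step4 : ∀ s : ℝ, (∫⁻ w : Fin m → ℝ, Hf m a b t (w, s))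
      = Set.indicator (Set.Iio t)
          (fun s => ENNReal.ofReal (Real.exp (-(s * b))) * gl m a s) s := by
    intro s
    by_cases hst : s < t
    · rw [Set.indicator_of_mem (by exact hst : s ∈ Set.Iio t)]
      have heq : ∀ w : Fin m → ℝ, Hf m a b t (w, s)
          = ENNReal.ofReal (Real.exp (-(s * b))) *
            Set.indicator {w : Fin m → ℝ | (∀ j, 0 ≤ w j) ∧ (∑ j, w j) ≤ s}
              (fun w => ENNReal.ofReal
                (Real.exp ((s - ∑ j, w j) * a 0 + ∑ j, w j * a j.succ))) w := by
        intro w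
        simp only [Hf]
        by_cases hw : (∀ j, 0 ≤ w j) ∧ (∑ j, w j) ≤ s
        · have hmem : (w, s) ∈ {q : (Fin m → ℝ) × ℝ |
              (∀ j, 0 ≤ q.1 j) ∧ (∑ j, q.1 j) ≤ q.2 ∧ q.2 < t} := ⟨hw.1, hw.2, hst⟩
          have hmem2 : w ∈ {w : Fin m → ℝ | (∀ j, 0 ≤ w j) ∧ (∑ j, w j) ≤ s} := hw
          rw [Set.indicator_of_mem hmem, Set.indicator_of_mem hmem2,
            ← ENNReal.ofReal_mul (Real.exp_nonneg _), ← Real.exp_add]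
          congr 2
          have hsplit : ∑ j, w j * (a j.succ - b)
              = (∑ j, w j * a j.succ) - (∑ j, w j) * b := by
            rw [Finset.sum_mul, ← Finset.sum_sub_distrib]
            apply Finset.sum_congr rfl
            intro j _
            ring
          rw [hsplit]
          ring
        · have hmem : (w, s) ∉ {q : (Fin m → ℝ) × ℝ |
              (∀ j, 0 ≤ q.1 j) ∧ (∑ j, q.1 j) ≤ q.2 ∧ q.2 < t} := by
            intro hc; exact hw ⟨hc.1, hc.2.1⟩
          have hmem2 : w ∉ {w : Fin m → ℝ | (∀ j, 0 ≤ w j) ∧ (∑ j, w j) ≤ s} := hw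
          rw [Set.indicator_of_notMem hmem, Set.indicator_of_notMem hmem2]
          simp
      rw [lintegral_congr heq, lintegral_const_mul _ (meas_integrand m a s)]
      rfl
    · rw [Set.indicator_of_notMem (by simpa using hst)]
      have heq : ∀ w : Fin m → ℝ, Hf m a b t (w, s) = 0 := by
        intro w
        simp only [Hf]
        apply Set.indicator_of_notMem
        intro hc
        exact hst hc.2.2
      rw [lintegral_congr heq]
      simp
  rw [step1, step2, step3, lintegral_congr step4,
    lintegral_indicator measurableSet_Iio]

lemma cheb (m : ℕ) {t d : ℝ} (ht : 0 < t) (hd : 0 < d) (k : ℝ → ℝ) (C : ℝ)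
    (hkm : Measurable k) (hk0 : ∀ s, 0 ≤ k s) (hkC : ∀ s ∈ Set.Ioo 0 t, k s ≤ C)
    (hP : ∀ σ s : ℝ, σ ∈ Set.Ioo 0 t → s ∈ Set.Ioo 0 t → σ ≤ s →
      σ ^ m * k s ≤ s ^ m * k σ) :
    ∫ s in Set.Ioo 0 t, Real.exp (s * d) * k s
      ≤ ((m + 1 : ℝ) / (d * t)) * Real.exp (t * d) * ∫ s in Set.Ioo 0 t, k s := by
  have hC0 : 0 ≤ C := le_trans (hk0 (t/2)) (hkC (t/2) ⟨by linarith, by linarith⟩)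
  set A : Set ℝ := Set.Ioo 0 t with hA
  have hAmeas : MeasurableSet A := measurableSet_Ioo
  -- integrability of bounded measurable functions on A
  have hint : ∀ (f : ℝ → ℝ) (M : ℝ), Measurable f → (∀ s ∈ A, |f s| ≤ M) →
      Integrable f (volume.restrict A) := by
    intro f M hm hb
    apply Integrable.mono' (integrable_const M) hm.aestronglyMeasurable
    refine (ae_restrict_iff' hAmeas).2 (Filter.Eventually.of_forall ?_)
    intro s hs
    simpa [Real.norm_eq_abs] using hb s hs
  have hkabs : ∀ s ∈ A, |k s| ≤ C := fun s hs => by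
    rw [abs_of_nonneg (hk0 s)]; exact hkC s hs
  have intk : Integrable k (volume.restrict A) := hint k C hkm hkabs
  have intE : Integrable (fun s => Real.exp (s * d)) (volume.restrict A) := by
    apply hint _ (Real.exp (t * d)) (by fun_prop)
    intro s hs
    rw [abs_of_nonneg (Real.exp_nonneg _)]
    exact Real.exp_le_exp.2 (mul_le_mul_of_nonneg_right hs.2.le hd.le)
  have intEk : Integrable (fun s => Real.exp (s * d) * k s) (volume.restrict A) := by
    apply hint _ (Real.exp (t * d) * C) (by fun_prop)
    intro s hs
    rw [abs_mul, abs_of_nonneg (Real.exp_nonneg _)]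
    apply mul_le_mul _ (hkabs s hs) (abs_nonneg _) (Real.exp_nonneg _)
    exact Real.exp_le_exp.2 (mul_le_mul_of_nonneg_right hs.2.le hd.le)
  have intw : Integrable (fun s : ℝ => s ^ m) (volume.restrict A) := by
    apply hint _ (t ^ m) (by fun_prop)
    intro s hs
    rw [abs_of_nonneg (pow_nonneg hs.1.le m)]
    exact pow_le_pow_left₀ hs.1.le hs.2.le m
  have intwE : Integrable (fun s : ℝ => s ^ m * Real.exp (s * d)) (volume.restrict A) := by
    apply hint _ (t ^ m * Real.exp (t * d)) (by fun_prop)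
    intro s hs
    rw [abs_mul, abs_of_nonneg (pow_nonneg hs.1.le m), abs_of_nonneg (Real.exp_nonneg _)]
    exact mul_le_mul (pow_le_pow_left₀ hs.1.le hs.2.le m)
      (Real.exp_le_exp.2 (mul_le_mul_of_nonneg_right hs.2.le hd.le))
      (Real.exp_nonneg _) (pow_nonneg ht.le m)
  set K := ∫ s in A, k s with hK
  set KE := ∫ s in A, Real.exp (s * d) * k s with hKE
  set W := ∫ s in A, s ^ m with hW
  set WE := ∫ s in A, s ^ m * Real.exp (s * d) with hWE
  -- inner expansion
  have inner_eq : ∀ σ : ℝ, (∫ s in A,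
      (Real.exp (s * d) - Real.exp (σ * d)) * (k s * σ ^ m - k σ * s ^ m))
      = KE * σ ^ m - K * (σ ^ m * Real.exp (σ * d)) - WE * k σ
        + W * (Real.exp (σ * d) * k σ) := by
    intro σ
    have hfe : (fun s => (Real.exp (s * d) - Real.exp (σ * d)) * (k s * σ ^ m - k σ * s ^ m))
        = fun s => (σ ^ m * (Real.exp (s * d) * k s)
            - (σ ^ m * Real.exp (σ * d)) * k s
            - k σ * (s ^ m * Real.exp (s * d)))
            + (Real.exp (σ * d) * k σ) * s ^ m := by
      funext s; ring
    rw [hfe]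
    have i1 : Integrable (fun s => σ ^ m * (Real.exp (s * d) * k s)) (volume.restrict A) :=
      intEk.const_mul _
    have i2 : Integrable (fun s => σ ^ m * Real.exp (σ * d) * k s) (volume.restrict A) :=
      intk.const_mul _
    have i3 : Integrable (fun s : ℝ => k σ * (s ^ m * Real.exp (s * d))) (volume.restrict A) :=
      intwE.const_mul _
    have i4 : Integrable (fun s : ℝ => Real.exp (σ * d) * k σ * s ^ m) (volume.restrict A) :=
      intw.const_mul _
    have i12 : Integrable (fun s => σ ^ m * (Real.exp (s * d) * k s)
        - σ ^ m * Real.exp (σ * d) * k s) (volume.restrict A) := i1.sub i2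
    have i123 : Integrable (fun s => σ ^ m * (Real.exp (s * d) * k s)
        - σ ^ m * Real.exp (σ * d) * k s
        - k σ * (s ^ m * Real.exp (s * d))) (volume.restrict A) := i12.sub i3
    rw [integral_add i123 i4, integral_sub i12 i3, integral_sub i1 i2,
      integral_const_mul, integral_const_mul, integral_const_mul, integral_const_mul]
    rw [← hK, ← hKE, ← hW, ← hWE]
    ring
  -- the double integral is nonpositive
  have D_nonpos : (∫ σ in A, (∫ s in A,
      (Real.exp (s * d) - Real.exp (σ * d)) * (k s * σ ^ m - k σ * s ^ m))) ≤ 0 := by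
    apply setIntegral_nonpos hAmeas
    intro σ hσ
    apply setIntegral_nonpos hAmeas
    intro s hs
    rcases le_total σ s with h | h
    · have h1 : Real.exp (σ * d) ≤ Real.exp (s * d) :=
        Real.exp_le_exp.2 (mul_le_mul_of_nonneg_right h hd.le)
      have h2 : σ ^ m * k s ≤ s ^ m * k σ := hP σ s hσ hs h
      nlinarith
    · have h1 : Real.exp (s * d) ≤ Real.exp (σ * d) :=
        Real.exp_le_exp.2 (mul_le_mul_of_nonneg_right h hd.le)
      have h2 : s ^ m * k σ ≤ σ ^ m * k s := hP s σ hs hσ h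
      nlinarith
  -- expand the double integral
  have D_eq : (∫ σ in A, (∫ s in A,
      (Real.exp (s * d) - Real.exp (σ * d)) * (k s * σ ^ m - k σ * s ^ m)))
      = KE * W - K * WE - WE * K + W * KE := by
    rw [setIntegral_congr_fun hAmeas (fun σ _ => inner_eq σ)]
    have j1 : Integrable (fun σ : ℝ => KE * σ ^ m) (volume.restrict A) := intw.const_mul _
    have j2 : Integrable (fun σ : ℝ => K * (σ ^ m * Real.exp (σ * d))) (volume.restrict A) :=
      intwE.const_mul _
    have j3 : Integrable (fun σ : ℝ => WE * k σ) (volume.restrict A) := intk.const_mul _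
    have j4 : Integrable (fun σ : ℝ => W * (Real.exp (σ * d) * k σ)) (volume.restrict A) :=
      intEk.const_mul _
    have j12 : Integrable (fun σ : ℝ => KE * σ ^ m - K * (σ ^ m * Real.exp (σ * d)))
        (volume.restrict A) := j1.sub j2
    have j123 : Integrable (fun σ : ℝ => KE * σ ^ m - K * (σ ^ m * Real.exp (σ * d)) - WE * k σ)
        (volume.restrict A) := j12.sub j3
    rw [integral_add j123 j4, integral_sub j12 j3, integral_sub j1 j2,
      integral_const_mul, integral_const_mul, integral_const_mul, integral_const_mul]
  have key : KE * W ≤ K * WE := by nlinarith [D_nonpos, D_eq]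
  -- compute W
  have hWval : W = t ^ (m + 1) / (m + 1) := by
    rw [hW, hA, ← integral_Ioc_eq_integral_Ioo, ← intervalIntegral.integral_of_le ht.le,
      integral_pow]
    simp
  have hWpos : 0 < W := by
    rw [hWval]; positivity
  -- bound WE
  have hWEbound : WE ≤ t ^ m * (Real.exp (t * d) / d) := by
    have h1 : WE ≤ ∫ s in A, t ^ m * Real.exp (s * d) := by
      apply setIntegral_mono_on intwE (intE.const_mul _) hAmeas
      intro s hs
      exact mul_le_mul_of_nonneg_right (pow_le_pow_left₀ hs.1.le hs.2.le m) (Real.exp_nonneg _)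
    have h2 : (∫ s in A, t ^ m * Real.exp (s * d))
        = t ^ m * ((Real.exp (t * d) - 1) / d) := by
      rw [integral_const_mul]
      congr 1
      rw [hA, ← integral_Ioc_eq_integral_Ioo, ← intervalIntegral.integral_of_le ht.le]
      rw [intervalIntegral.integral_comp_mul_right (fun u => Real.exp u) hd.ne']
      rw [integral_exp]
      simp [smul_eq_mul, div_eq_inv_mul]
    have h3 : t ^ m * ((Real.exp (t * d) - 1) / d) ≤ t ^ m * (Real.exp (t * d) / d) := by
      gcongr
      linarith [Real.exp_pos (t * d)]
    linarith
  have hK0 : 0 ≤ K := setIntegral_nonneg hAmeas (fun s _ => hk0 s)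
  -- final computation
  have hRW : ((m + 1 : ℝ) / (d * t)) * Real.exp (t * d) * K * W
      = K * (t ^ m * (Real.exp (t * d) / d)) := by
    rw [hWval]
    field_simp
    ring
  have : KE * W ≤ ((m + 1 : ℝ) / (d * t)) * Real.exp (t * d) * K * W := by
    rw [hRW]
    calc KE * W ≤ K * WE := key
      _ ≤ K * (t ^ m * (Real.exp (t * d) / d)) := mul_le_mul_of_nonneg_left hWEbound hK0
  exact le_of_mul_le_mul_right this hWpos

lemma Ifun_eq (m : ℕ) (t : ℝ) (a : Fin (m+1) → ℝ) (b : ℝ) :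
    Ifun (m+1) t (Fin.snoc a b) = Real.exp (t * b) * (LJ m a b t).toReal := by
  rw [Ifun]
  simp only [Fin.snoc_last, Fin.snoc_castSucc]
  congr 1
  have hmf : Measurable (fun z : Fin (m+1) → ℝ =>
      Set.indicator {z : Fin (m+1) → ℝ | (∀ i, 0 ≤ z i) ∧ (∑ i, z i) < t}
        (fun z => Real.exp (∑ i, z i * (a i - b))) z) := by
    apply Measurable.indicator
    · exact Real.measurable_exp.comp
        (Finset.measurable_sum _ fun i _ => (measurable_pi_apply i).mul_const _)
    · exact (meas_nonnegset (m+1)).inter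
        (measurableSet_lt (meas_sum (m+1)) measurable_const)
  rw [integral_eq_lintegral_of_nonneg_ae]
  · rw [LJ]
    congr 1
    apply lintegral_congr
    intro z
    by_cases hz : z ∈ {z : Fin (m+1) → ℝ | (∀ i, 0 ≤ z i) ∧ (∑ i, z i) < t}
    · rw [Set.indicator_of_mem hz, Set.indicator_of_mem hz]
    · rw [Set.indicator_of_notMem hz, Set.indicator_of_notMem hz]
      simp
  · apply Filter.Eventually.of_forall
    intro z
    apply Set.indicator_nonneg
    intro z' _
    exact Real.exp_nonneg _
  · exact hmf.aestronglyMeasurable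

lemma LJ_toReal (m : ℕ) (a : Fin (m+1) → ℝ) (y : ℝ) (hy : ∀ i, a i ≤ y) (b : ℝ)
    {t : ℝ} (ht : 0 < t) :
    (LJ m a b t).toReal = ∫ s in Set.Ioo 0 t, Real.exp (-(s * b)) * (gl m a s).toReal := by
  rw [slice]
  have h1 : (∫⁻ s in Set.Iio t, ENNReal.ofReal (Real.exp (-(s * b))) * gl m a s)
      = ∫⁻ s in Set.Ioo 0 t, ENNReal.ofReal (Real.exp (-(s * b))) * gl m a s := by
    rw [← Set.Iio_union_Ico_eq_Iio ht.le, lintegral_union measurableSet_Ico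
      ((Set.Iio_disjoint_Ici le_rfl).mono_right Set.Ico_subset_Ici_self)]
    have hz : (∫⁻ s in Set.Iio (0:ℝ), ENNReal.ofReal (Real.exp (-(s * b))) * gl m a s) = 0 := by
      rw [setLIntegral_congr_fun measurableSet_Iio
        (fun s (hs : s < 0) => by
          rw [gl_zero m a hs, mul_zero])]
      simp
    rw [hz, zero_add, setLIntegral_congr (Filter.EventuallyEq.symm Ioo_ae_eq_Ico)]
  rw [h1]
  rw [← integral_toReal]
  · apply integral_congr_ae
    apply Filter.Eventually.of_forall
    intro s
    show (ENNReal.ofReal (Real.exp (-(s * b))) * gl m a s).toReal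
        = Real.exp (-(s * b)) * (gl m a s).toReal
    rw [ENNReal.toReal_mul, ENNReal.toReal_ofReal (Real.exp_nonneg _)]
  · exact (((Real.measurable_exp.comp
      ((measurable_id.mul_const b).neg)).ennreal_ofReal).mul
      (gl_measurable m a)).aemeasurable.restrict
  · apply Filter.Eventually.of_forall
    intro s
    exact ENNReal.mul_lt_top ENNReal.ofReal_lt_top (gl_lt_top m a y hy s)

end S12

/-- Lemma `L:Ixtoy`.  Let `n ≥ 2`, `x < y`, and `a_0,…,a_{n−1} ≤ y`.
Then `I_n(t;𝐚,x) ≤ (n/((y−x)t))·I_n(t;𝐚,y)`. -/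
theorem statement12 (n : ℕ) (hn : 2 ≤ n) (t : ℝ) (ht : 0 < t)
    (x y : ℝ) (hxy : x < y) (a : Fin n → ℝ) (ha : ∀ i, a i ≤ y) :
    Ifun n t (Fin.snoc a x) ≤ ((n : ℝ) / ((y - x) * t)) * Ifun n t (Fin.snoc a y) := by
  classical
  obtain ⟨m, rfl⟩ : ∃ m, n = m + 1 := ⟨n - 1, by omega⟩
  set d := y - x with hd
  have hd0 : 0 < d := by rw [hd]; linarith
  set k : ℝ → ℝ := fun s => Real.exp (-(s * y)) * (S12.gl m a s).toReal with hk
  have hkm : Measurable k := by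
    rw [hk]
    exact (Real.measurable_exp.comp ((measurable_id.mul_const y).neg)).mul
      (S12.gl_measurable m a).ennreal_toReal
  have hk0 : ∀ s, 0 ≤ k s := fun s =>
    mul_nonneg (Real.exp_nonneg _) ENNReal.toReal_nonneg
  have hkC : ∀ s ∈ Set.Ioo (0:ℝ) t, k s ≤ t ^ m := by
    intro s hs
    have hb := S12.gl_le m a y ha (s := s) hs.1.le
    have hfin : ENNReal.ofReal (Real.exp (s * y)) * ENNReal.ofReal s ^ m ≠ ⊤ :=
      ENNReal.mul_ne_top ENNReal.ofReal_ne_top (ENNReal.pow_ne_top ENNReal.ofReal_ne_top)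
    have h2 : (S12.gl m a s).toReal ≤ Real.exp (s * y) * s ^ m := by
      have := ENNReal.toReal_mono hfin hb
      rwa [ENNReal.toReal_mul, ENNReal.toReal_pow, ENNReal.toReal_ofReal (Real.exp_nonneg _),
        ENNReal.toReal_ofReal hs.1.le] at this
    have h3 : k s ≤ Real.exp (-(s * y)) * (Real.exp (s * y) * s ^ m) := by
      rw [hk]
      exact mul_le_mul_of_nonneg_left h2 (Real.exp_nonneg _)
    have h4 : Real.exp (-(s * y)) * (Real.exp (s * y) * s ^ m) = s ^ m := by
      rw [← mul_assoc, ← Real.exp_add]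
      simp
    rw [h4] at h3
    exact le_trans h3 (pow_le_pow_left₀ hs.1.le hs.2.le m)
  have hP : ∀ σ s : ℝ, σ ∈ Set.Ioo (0:ℝ) t → s ∈ Set.Ioo (0:ℝ) t → σ ≤ s →
      σ ^ m * k s ≤ s ^ m * k σ := by
    intro σ s hσ hs hσs
    have hb := S12.gl_scale m a y ha hσ.1 hσs
    have hfin : ENNReal.ofReal s ^ m *
        (ENNReal.ofReal (Real.exp ((s - σ) * y)) * S12.gl m a σ) ≠ ⊤ :=
      ENNReal.mul_ne_top (ENNReal.pow_ne_top ENNReal.ofReal_ne_top)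
        (ENNReal.mul_ne_top ENNReal.ofReal_ne_top (S12.gl_lt_top m a y ha σ).ne)
    have h2 := ENNReal.toReal_mono hfin hb
    rw [ENNReal.toReal_mul, ENNReal.toReal_mul, ENNReal.toReal_mul, ENNReal.toReal_pow,
      ENNReal.toReal_pow, ENNReal.toReal_ofReal hσ.1.le,
      ENNReal.toReal_ofReal (le_trans hσ.1.le hσs), ENNReal.toReal_ofReal (Real.exp_nonneg _)]
      at h2
    have e1 : Real.exp (-(s * y)) * Real.exp ((s - σ) * y) = Real.exp (-(σ * y)) := by
      rw [← Real.exp_add]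
      congr 1
      ring
    calc σ ^ m * k s = Real.exp (-(s * y)) * (σ ^ m * (S12.gl m a s).toReal) := by
          rw [hk]; ring
      _ ≤ Real.exp (-(s * y)) * (s ^ m * (Real.exp ((s - σ) * y) * (S12.gl m a σ).toReal)) :=
          mul_le_mul_of_nonneg_left h2 (Real.exp_nonneg _)
      _ = s ^ m * ((Real.exp (-(s * y)) * Real.exp ((s - σ) * y)) * (S12.gl m a σ).toReal) := by
          ring
      _ = s ^ m * k σ := by rw [e1, hk]
  have hcheb := S12.cheb m ht hd0 k (t ^ m) hkm hk0 hkC hP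
  have hIx : Ifun (m+1) t (Fin.snoc a x)
      = Real.exp (t * x) * ∫ s in Set.Ioo 0 t, Real.exp (s * d) * k s := by
    rw [S12.Ifun_eq, S12.LJ_toReal m a y ha x ht]
    congr 1
    apply setIntegral_congr_fun measurableSet_Ioo
    intro s _
    have e2 : Real.exp (s * d) * Real.exp (-(s * y)) = Real.exp (-(s * x)) := by
      rw [← Real.exp_add]
      congr 1
      rw [hd]
      ring
    rw [hk]
    show Real.exp (-(s * x)) * (S12.gl m a s).toReal
        = Real.exp (s * d) * (Real.exp (-(s * y)) * (S12.gl m a s).toReal)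
    rw [← mul_assoc, e2]
  have hIy : Ifun (m+1) t (Fin.snoc a y)
      = Real.exp (t * y) * ∫ s in Set.Ioo 0 t, k s := by
    rw [S12.Ifun_eq, S12.LJ_toReal m a y ha y ht]
  rw [hIx, hIy]
  have e3 : Real.exp (t * x) * Real.exp (t * d) = Real.exp (t * y) := by
    rw [← Real.exp_add]
    congr 1
    rw [hd]
    ring
  calc Real.exp (t * x) * ∫ s in Set.Ioo 0 t, Real.exp (s * d) * k s
      ≤ Real.exp (t * x) * (((m + 1 : ℝ) / (d * t)) * Real.exp (t * d)
          * ∫ s in Set.Ioo 0 t, k s) :=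
        mul_le_mul_of_nonneg_left hcheb (Real.exp_nonneg _)
    _ = ((m + 1 : ℝ) / (d * t)) * ((Real.exp (t * x) * Real.exp (t * d))
          * ∫ s in Set.Ioo 0 t, k s) := by ring
    _ = ((m + 1 : ℕ) : ℝ) / (d * t) * (Real.exp (t * y) * ∫ s in Set.Ioo 0 t, k s) := by
        rw [e3]
        push_cast
        ring
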